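/- Let σ > 0, v > 0 and ε ≥ 0. If the vℤ-aliased Gaussian density satisfies the flatness condition f_{vℤ,σ²}(x) ≤ (1+ε)/v for all x ∈ [−v/2, v/2], then the mod-vℤ channel capacity satisfies C(vℤ,σ²) = log₂ v − h(vℤ,σ²) ≤ log₂(1+ε) ≤ ε · log₂ e. In particular ε₁ = C(Λ₁,σ²) is at most ε_{Λ₁}(σ) · log₂ e for Λ₁ = vℤ, where ε_{Λ₁}(σ) = sup_x |v · f_{vℤ,σ²}(x) − 1| is the flatness factor. -/

import Mathlib

open Real

/-- The `vℤ`-aliased (wrapped) Gaussian density with noise variance `σ2`. -/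
noncomputable def aliasedGaussian (v σ2 : ℝ) (x : ℝ) : ℝ :=
  ∑' j : ℤ, (Real.sqrt (2 * Real.pi * σ2))⁻¹ * Real.exp (-(x + v * (j : ℝ)) ^ 2 / (2 * σ2))

/-- The differential entropy (in bits) of the `vℤ`-aliased Gaussian noise. -/
noncomputable def aliasedEntropy (v σ2 : ℝ) : ℝ :=
  -∫ x in (-v / 2)..(v / 2), aliasedGaussian v σ2 x * Real.logb 2 (aliasedGaussian v σ2 x)

section Aux

open MeasureTheory intervalIntegral

variable {σ v : ℝ}

private lemma summable_exp_neg_int_sq {b : ℝ} (hb : 0 < b) :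
    Summable (fun j : ℤ => Real.exp (-b * (j : ℝ) ^ 2)) := by
  have key : Summable (fun n : ℕ => Real.exp (-b * (n : ℝ) ^ 2)) := by
    have hgeo : Summable (fun n : ℕ => Real.exp (-b) ^ n) :=
      summable_geometric_of_lt_one (Real.exp_pos _).le
        (Real.exp_lt_one_iff.2 (by linarith))
    refine Summable.of_nonneg_of_le (fun n => (Real.exp_pos _).le) (fun n => ?_) hgeo
    rw [← Real.exp_nat_mul]
    apply Real.exp_le_exp.2
    have h1 : (n : ℝ) ≤ (n : ℝ) ^ 2 := by
      rcases Nat.eq_zero_or_pos n with rfl | hn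
      · simp
      · have h2 : (1 : ℝ) ≤ (n : ℝ) := by exact_mod_cast hn
        nlinarith
    nlinarith
  refine Summable.of_nat_of_neg ?_ ?_ <;> simpa using key

private lemma gauss_sq_bound (hv : 0 < v) {x : ℝ} (hx : x ∈ Set.Icc (-v / 2) (v / 2)) (j : ℤ) :
    v ^ 2 * (j : ℝ) ^ 2 / 4 ≤ (x + v * (j : ℝ)) ^ 2 := by
  obtain ⟨hx1, hx2⟩ := hx
  rcases eq_or_ne j 0 with rfl | hj
  · simpa using sq_nonneg x
  · have hj1 : (1 : ℝ) ≤ |(j : ℝ)| := by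
      rw [← Int.cast_abs]
      exact_mod_cast Int.one_le_abs hj
    rcases le_or_gt 1 (j : ℝ) with h | h
    · have h1 : -(x + v * (j : ℝ)) ≤ v * (j : ℝ) / 2 := by nlinarith
      have h2 : v * (j : ℝ) / 2 ≤ x + v * (j : ℝ) := by nlinarith
      calc v ^ 2 * (j : ℝ) ^ 2 / 4 = (v * (j : ℝ) / 2) ^ 2 := by ring
        _ ≤ (x + v * (j : ℝ)) ^ 2 := sq_le_sq' h1 h2
    · have h' : (j : ℝ) ≤ -1 := by
        rcases abs_cases (j : ℝ) with ⟨h1, _⟩ | ⟨h1, _⟩ <;> nlinarith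
      have h1 : -(-(x + v * (j : ℝ))) ≤ v * (j : ℝ) / 2 := by nlinarith
      have h2 : v * (j : ℝ) / 2 ≤ -(x + v * (j : ℝ)) := by nlinarith
      calc v ^ 2 * (j : ℝ) ^ 2 / 4 = (v * (j : ℝ) / 2) ^ 2 := by ring
        _ ≤ (-(x + v * (j : ℝ))) ^ 2 := sq_le_sq' h1 h2
        _ = (x + v * (j : ℝ)) ^ 2 := neg_sq _

end Aux

/-- if the `vℤ`-aliased Gaussian density is `ε`-flat, i.e.
`f_{vℤ,σ²}(x) ≤ (1+ε)/v` on the fundamental interval, then the mod-vℤ channel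
capacity is bounded as `C(vℤ,σ²) = log₂ v − h(vℤ,σ²) ≤ log₂(1+ε) ≤ ε log₂ e`. -/
theorem capacity_le_of_flatness (σ v ε : ℝ) (hσ : 0 < σ) (hv : 0 < v) (hε : 0 ≤ ε)
    (hflat : ∀ x ∈ Set.Icc (-v / 2) (v / 2),
      aliasedGaussian v (σ ^ 2) x ≤ (1 + ε) / v) :
    Real.logb 2 v - aliasedEntropy v (σ ^ 2) ≤ Real.logb 2 (1 + ε) ∧
    Real.logb 2 (1 + ε) ≤ ε * Real.logb 2 (Real.exp 1) := by
  constructor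
  · -- main part
    set c : ℝ := (Real.sqrt (2 * Real.pi * σ ^ 2))⁻¹ with hc_def
    have hσ2 : (0 : ℝ) < 2 * σ ^ 2 := by positivity
    have hsqrt_pos : 0 < Real.sqrt (2 * Real.pi * σ ^ 2) :=
      Real.sqrt_pos.2 (by positivity)
    have hc : 0 < c := inv_pos.2 hsqrt_pos
    set φ : ℝ → ℝ := fun x => c * Real.exp (-x ^ 2 / (2 * σ ^ 2)) with hφ_def
    have hφcont : Continuous φ := by
      apply continuous_const.mul
      exact (Continuous.div_const (continuous_pow 2).neg _).rexp
    have hφnonneg : ∀ x, 0 ≤ φ x := fun x => by positivity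
    set f : ℝ → ℝ := aliasedGaussian v (σ ^ 2) with hf_def
    have hf_eq : ∀ x, f x = ∑' j : ℤ, φ (x + v * (j : ℝ)) := fun x => rfl
    set b : ℝ := v ^ 2 / (8 * σ ^ 2) with hb_def
    have hb : 0 < b := by positivity
    set u : ℤ → ℝ := fun j => c * Real.exp (-b * (j : ℝ) ^ 2) with hu_def
    have hu : Summable u := (summable_exp_neg_int_sq hb).mul_left c
    have hbound : ∀ (j : ℤ) (x : ℝ), x ∈ Set.Icc (-v / 2) (v / 2) →
        φ (x + v * (j : ℝ)) ≤ u j := by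
      intro j x hx
      have hsq := gauss_sq_bound hv hx j
      have : -(x + v * (j : ℝ)) ^ 2 / (2 * σ ^ 2) ≤ -b * (j : ℝ) ^ 2 := by
        have h2 : -b * (j : ℝ) ^ 2 * (2 * σ ^ 2) = -(v ^ 2 * (j : ℝ) ^ 2 / 4) := by
          rw [hb_def]; field_simp; ring
        rw [div_le_iff₀ hσ2, h2]
        linarith
      exact mul_le_mul_of_nonneg_left (Real.exp_le_exp.2 this) hc.le
    -- continuity of f on the fundamental interval
    have hfcont : ContinuousOn f (Set.Icc (-v / 2) (v / 2)) := by
      rw [show f = fun x => ∑' j : ℤ, φ (x + v * (j : ℝ)) from rfl]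
      refine continuousOn_tsum (fun j => ?_) hu (fun j x hx => ?_)
      · exact (hφcont.comp (continuous_id.add continuous_const)).continuousOn
      · rw [Real.norm_of_nonneg (hφnonneg _)]
        exact hbound j x hx
    -- positivity of f on the fundamental interval
    have hfpos : ∀ x ∈ Set.Icc (-v / 2) (v / 2), 0 < f x := by
      intro x hx
      have hsum : Summable (fun j : ℤ => φ (x + v * (j : ℝ))) :=
        Summable.of_nonneg_of_le (fun j => hφnonneg _) (fun j => hbound j x hx) hu
      have h0 : φ (x + v * (0 : ℤ)) ≤ f x := by
        rw [hf_eq]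
        exact Summable.le_tsum hsum 0 (fun j _ => hφnonneg _)
      have : 0 < φ (x + v * ((0 : ℤ) : ℝ)) := by positivity
      calc (0:ℝ) < φ (x + v * ((0 : ℤ) : ℝ)) := this
        _ ≤ f x := h0
    -- integrability of the Gaussian and its total integral
    have hφint : MeasureTheory.Integrable φ := by
      have : MeasureTheory.Integrable (fun x : ℝ => Real.exp (-(2 * σ ^ 2)⁻¹ * x ^ 2)) :=
        integrable_exp_neg_mul_sq (by positivity)
      have heq : ∀ x : ℝ, c * Real.exp (-(2 * σ ^ 2)⁻¹ * x ^ 2) = φ x := by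
        intro x; rw [hφ_def]; ring_nf
      simpa only [heq] using this.const_mul c
    have hφ_total : ∫ x : ℝ, φ x = 1 := by
      have h1 : ∀ x : ℝ, φ x = c * Real.exp (-(2 * σ ^ 2)⁻¹ * x ^ 2) := by
        intro x; rw [hφ_def]; ring_nf
      calc ∫ x : ℝ, φ x = ∫ x : ℝ, c * Real.exp (-(2 * σ ^ 2)⁻¹ * x ^ 2) := by
            simp_rw [h1]
        _ = c * ∫ x : ℝ, Real.exp (-(2 * σ ^ 2)⁻¹ * x ^ 2) :=
            MeasureTheory.integral_const_mul _ _
        _ = c * Real.sqrt (Real.pi / (2 * σ ^ 2)⁻¹) := by rw [integral_gaussian]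
        _ = 1 := by
            have he : Real.pi / (2 * σ ^ 2)⁻¹ = 2 * Real.pi * σ ^ 2 := by
              field_simp
            rw [he, hc_def]
            exact inv_mul_cancel₀ hsqrt_pos.ne'
    -- the wrapped density integrates to 1 over the fundamental interval
    have hint_one : ∫ x in (-v / 2)..(v / 2), f x = 1 := by
      have hGcont : ∀ j : ℤ, Continuous (fun x : ℝ => φ (x + v * (j : ℝ))) := fun j =>
        hφcont.comp (continuous_id.add continuous_const)
      set G : ℤ → C(ℝ, ℝ) := fun j => ⟨fun x => φ (x + v * (j : ℝ)), hGcont j⟩ with hG_def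
      have hle' : (-v / 2 : ℝ) ≤ v / 2 := by linarith
      have hGnorm : ∀ j : ℤ, ‖(G j).restrict
          (⟨Set.uIcc (-v / 2) (v / 2), isCompact_uIcc⟩ : TopologicalSpace.Compacts ℝ)‖ ≤ u j := by
        intro j
        rw [ContinuousMap.norm_le _ (show 0 ≤ u j by rw [hu_def]; positivity)]
        rintro ⟨x, hx⟩
        have hx2 : x ∈ Set.uIcc (-v / 2) (v / 2) := hx
        rw [Set.uIcc_of_le hle'] at hx2
        simpa [hG_def, Real.norm_of_nonneg (hφnonneg _)] using hbound j x hx2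
      have hsum_norm : Summable fun j : ℤ => ‖(G j).restrict
          (⟨Set.uIcc (-v / 2) (v / 2), isCompact_uIcc⟩ : TopologicalSpace.Compacts ℝ)‖ :=
        Summable.of_nonneg_of_le (fun j => norm_nonneg _) hGnorm hu
      have hswap := intervalIntegral.tsum_intervalIntegral_eq_of_summable_norm
        (a := -v / 2) (b := v / 2) (f := G) hsum_norm
      -- integrability and total mass of the rescaled Gaussian
      have hF : MeasureTheory.Integrable (fun t : ℝ => v * φ (v * t)) :=
        ((MeasureTheory.integrable_comp_mul_left_iff φ hv.ne').2 hφint).const_mul v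
      have hFtotal : ∫ t : ℝ, v * φ (v * t) = 1 := by
        rw [MeasureTheory.integral_const_mul, MeasureTheory.Measure.integral_comp_mul_left φ v,
          hφ_total, abs_of_pos (inv_pos.2 hv), smul_eq_mul, mul_one, mul_inv_cancel₀ hv.ne']
      have hHasSum := hF.hasSum_intervalIntegral (μ := MeasureTheory.volume) (-(1 / 2))
      rw [hFtotal] at hHasSum
      have hterm : ∀ n : ℤ, (∫ t in (-(1 / 2) + (n : ℝ))..(-(1 / 2) + (n : ℝ) + 1),
          v * φ (v * t)) = ∫ x in (-v / 2)..(v / 2), φ (x + v * (n : ℝ)) := by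
        intro n
        rw [intervalIntegral.integral_comp_add_right (fun x => φ x) (v * (n : ℝ)),
          intervalIntegral.integral_const_mul,
          intervalIntegral.integral_comp_mul_left (fun x => φ x) hv.ne', smul_eq_mul,
          ← mul_assoc, mul_inv_cancel₀ hv.ne', one_mul]
        have e1 : v * (-(1 / 2) + (n : ℝ)) = -v / 2 + v * (n : ℝ) := by ring
        have e2 : v * (-(1 / 2) + (n : ℝ) + 1) = v / 2 + v * (n : ℝ) := by ring
        rw [e1, e2]
      have htsum : ∑' j : ℤ, (∫ x in (-v / 2)..(v / 2), (G j : ℝ → ℝ) x) = 1 := by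
        have := hHasSum.tsum_eq
        rw [← this]
        exact tsum_congr fun n => by
          simpa [hG_def] using (hterm n).symm
      calc ∫ x in (-v / 2)..(v / 2), f x
          = ∫ x in (-v / 2)..(v / 2), ∑' j : ℤ, (G j : ℝ → ℝ) x := by
            refine intervalIntegral.integral_congr fun x _ => ?_
            simp [hf_eq, hG_def, hφ_def]
        _ = ∑' j : ℤ, (∫ x in (-v / 2)..(v / 2), (G j : ℝ → ℝ) x) := hswap.symm
        _ = 1 := htsum
    -- integrability of f * logb 2 f on the interval
    have hle : (-v / 2 : ℝ) ≤ v / 2 := by linarith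
    have huIcc : Set.uIcc (-v / 2) (v / 2) = Set.Icc (-v / 2) (v / 2) := Set.uIcc_of_le hle
    have hflogcont : ContinuousOn (fun x => f x * Real.logb 2 (f x))
        (Set.Icc (-v / 2) (v / 2)) := by
      apply hfcont.mul
      simp_rw [Real.logb]
      exact (hfcont.log (fun x hx => (hfpos x hx).ne')).div_const _
    have hint1 : IntervalIntegrable (fun x => f x * Real.logb 2 (f x))
        MeasureTheory.volume (-v / 2) (v / 2) := by
      apply ContinuousOn.intervalIntegrable
      rwa [huIcc]
    have hint2 : IntervalIntegrable (fun x => f x * Real.logb 2 ((1 + ε) / v))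
        MeasureTheory.volume (-v / 2) (v / 2) := by
      apply ContinuousOn.intervalIntegrable
      rw [huIcc]
      exact hfcont.mul continuousOn_const
    have hεv : (0 : ℝ) < (1 + ε) / v := by positivity
    have key : ∫ x in (-v / 2)..(v / 2), f x * Real.logb 2 (f x)
        ≤ Real.logb 2 (1 + ε) - Real.logb 2 v := by
      have step1 : ∫ x in (-v / 2)..(v / 2), f x * Real.logb 2 (f x)
          ≤ ∫ x in (-v / 2)..(v / 2), f x * Real.logb 2 ((1 + ε) / v) := by
        apply intervalIntegral.integral_mono_on hle hint1 hint2
        intro x hx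
        have h1 : Real.logb 2 (f x) ≤ Real.logb 2 ((1 + ε) / v) :=
          Real.logb_le_logb_of_le one_lt_two (hfpos x hx) (hflat x hx)
        exact mul_le_mul_of_nonneg_left h1 (hfpos x hx).le
      have step2 : ∫ x in (-v / 2)..(v / 2), f x * Real.logb 2 ((1 + ε) / v)
          = Real.logb 2 (1 + ε) - Real.logb 2 v := by
        rw [intervalIntegral.integral_mul_const, hint_one, one_mul,
          Real.logb_div (by linarith) hv.ne']
      linarith
    rw [aliasedEntropy]
    have : -(-∫ x in (-v / 2)..(v / 2), f x * Real.logb 2 (f x))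
        = ∫ x in (-v / 2)..(v / 2), f x * Real.logb 2 (f x) := neg_neg _
    simp only [hf_def] at key ⊢
    linarith [key]
  · -- logb 2 (1+ε) ≤ ε * logb 2 e
    have hlog2 : (0 : ℝ) < Real.log 2 := Real.log_pos one_lt_two
    have h1 : Real.log (1 + ε) ≤ ε := by
      have := Real.log_le_sub_one_of_pos (show (0:ℝ) < 1 + ε by linarith)
      linarith
    rw [Real.logb, Real.logb, Real.log_exp]
    rw [div_le_iff₀ hlog2]
    calc Real.log (1 + ε) ≤ ε := h1
      _ = ε * (1 / Real.log 2) * Real.log 2 := by field_simp
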